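/- Let P_{XY} and Q_{XY} be joint distributions on X × Y (written as P_X·P_{Y|X} and Q_X·Q_{Y|X}). If TV(P_{XY}, Q_{XY}) ≤ ε, then the probability under P_X of the set of x for which TV(P_{Y|X=x}, Q_{Y|X=x}) ≤ √ε is at least 1 − 2√ε. -/

import Mathlib

open Finset Real
open scoped Classical BigOperators

/-- Total variation distance (half the L¹ distance). -/
noncomputable def TV {X : Type*} [Fintype X] (P Q : X → ℝ) : ℝ :=
  (∑ x, |P x - Q x|) / 2

/-- Shannon entropy (natural log). -/
noncomputable def Hent {X : Type*} [Fintype X] (P : X → ℝ) : ℝ :=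
  -∑ x, P x * Real.log (P x)

/-- `P` is a probability distribution on a finite type. -/
def IsProb {X : Type*} [Fintype X] (P : X → ℝ) : Prop :=
  (∀ x, 0 ≤ P x) ∧ ∑ x, P x = 1

/-- Pushforward of a distribution along a map. -/
noncomputable def push {X Y : Type*} [Fintype X] (f : X → Y) (P : X → ℝ) : Y → ℝ :=
  fun y => ∑ x, if f x = y then P x else 0

/-- if the joints are ε-close in TV, then with `P_X`-probability at least
`1 - 2√ε` the conditionals are `√ε`-close in TV. -/
theorem conditional_tv_markov {X Y : Type*} [Fintype X] [Fintype Y]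
    [Nonempty X] [Nonempty Y]
    (P Q : X × Y → ℝ) (hP : IsProb P) (hQ : IsProb Q) (ε : ℝ) (hε : 0 < ε)
    (h : TV P Q ≤ ε) :
    1 - 2 * Real.sqrt ε ≤
      ∑ x ∈ Finset.univ.filter (fun x : X =>
          TV (fun y => P (x, y) / ∑ y', P (x, y'))
             (fun y => Q (x, y) / ∑ y', Q (x, y')) ≤ Real.sqrt ε),
        (∑ y, P (x, y)) := by
  classical
  have hPnn := hP.1
  have hQnn := hQ.1
  set PX : X → ℝ := fun x => ∑ y, P (x, y) with hPXdef
  set QX : X → ℝ := fun x => ∑ y, Q (x, y) with hQXdef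
  have hPXnn : ∀ x, 0 ≤ PX x := fun x => Finset.sum_nonneg fun y _ => hPnn _
  have hQXnn : ∀ x, 0 ≤ QX x := fun x => Finset.sum_nonneg fun y _ => hQnn _
  set g : X → ℝ := fun x =>
    TV (fun y => P (x, y) / PX x) (fun y => Q (x, y) / QX x) with hgdef
  have hgnn : ∀ x, 0 ≤ g x := by
    intro x
    have : (0:ℝ) ≤ ∑ y, |P (x,y) / PX x - Q (x,y) / QX x| :=
      Finset.sum_nonneg fun y _ => abs_nonneg _
    simpa [g, TV] using div_nonneg this (by norm_num)
  -- pointwise key bound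
  have key : ∀ x, 2 * (PX x * g x) ≤ (∑ y, |P (x,y) - Q (x,y)|) + |PX x - QX x| := by
    intro x
    have h2 : 2 * (PX x * g x) = ∑ y, PX x * |P (x,y) / PX x - Q (x,y) / QX x| := by
      simp only [g, TV]
      rw [eq_comm, ← Finset.mul_sum]
      ring
    rw [h2]
    have step1 : ∀ y, PX x * |P (x,y) / PX x - Q (x,y) / QX x| ≤
        |P (x,y) - Q (x,y)| + (Q (x,y) / QX x) * |QX x - PX x| := by
      intro y
      rcases eq_or_lt_of_le (hPXnn x) with hPX0 | hPX0
      · -- PX x = 0, so P (x,y) = 0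
        have hPxy : P (x,y) = 0 := by
          have := Finset.sum_eq_zero_iff_of_nonneg (fun y _ => hPnn (x,y)) |>.mp hPX0.symm
          exact this y (Finset.mem_univ y)
        rw [← hPX0, hPxy, zero_mul]
        exact add_nonneg (abs_nonneg _)
          (mul_nonneg (div_nonneg (hQnn _) (hQXnn x)) (abs_nonneg _))
      rcases eq_or_lt_of_le (hQXnn x) with hQX0 | hQX0
      · -- QX x = 0, so Q (x,y) = 0
        have hQxy : Q (x,y) = 0 := by
          have := Finset.sum_eq_zero_iff_of_nonneg (fun y _ => hQnn (x,y)) |>.mp hQX0.symm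
          exact this y (Finset.mem_univ y)
        rw [hQxy, ← hQX0]
        simp only [zero_div, sub_zero, zero_mul, add_zero, abs_div]
        rw [abs_of_nonneg (hPnn (x,y)), abs_of_pos hPX0, mul_comm,
          div_mul_cancel₀ _ (ne_of_gt hPX0)]
      · -- both positive
        have e1 : PX x * |P (x,y) / PX x - Q (x,y) / QX x|
            = |P (x,y) - PX x * Q (x,y) / QX x| := by
          rw [← abs_of_pos hPX0, ← abs_mul, abs_of_pos hPX0]
          congr 1
          field_simp
        rw [e1]
        have e2 : P (x,y) - PX x * Q (x,y) / QX x
            = (P (x,y) - Q (x,y)) + (Q (x,y) / QX x) * (QX x - PX x) := by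
          field_simp
          ring
        rw [e2]
        calc |(P (x,y) - Q (x,y)) + (Q (x,y) / QX x) * (QX x - PX x)|
            ≤ |P (x,y) - Q (x,y)| + |(Q (x,y) / QX x) * (QX x - PX x)| := abs_add_le _ _
          _ = |P (x,y) - Q (x,y)| + (Q (x,y) / QX x) * |QX x - PX x| := by
              rw [abs_mul, abs_of_nonneg (div_nonneg (hQnn _) (hQXnn x))]
    calc ∑ y, PX x * |P (x,y) / PX x - Q (x,y) / QX x|
        ≤ ∑ y, (|P (x,y) - Q (x,y)| + (Q (x,y) / QX x) * |QX x - PX x|) :=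
          Finset.sum_le_sum fun y _ => step1 y
      _ = (∑ y, |P (x,y) - Q (x,y)|) + (∑ y, Q (x,y) / QX x) * |QX x - PX x| := by
          rw [Finset.sum_add_distrib, Finset.sum_mul]
      _ ≤ (∑ y, |P (x,y) - Q (x,y)|) + |PX x - QX x| := by
          rw [abs_sub_comm]
          rcases eq_or_lt_of_le (hQXnn x) with hQX0 | hQX0
          · simp [← hQX0]
          · have : (∑ y, Q (x,y) / QX x) = 1 := by
              rw [← Finset.sum_div, div_eq_one_iff_eq (ne_of_gt hQX0)]
            rw [this, one_mul]
  -- total sum bound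
  have hTVsum : ∑ p : X × Y, |P p - Q p| ≤ 2 * ε := by
    have : (∑ p : X × Y, |P p - Q p|) / 2 ≤ ε := h
    linarith
  have hsum : ∑ x, PX x * g x ≤ 2 * ε := by
    have h1 : ∑ x, 2 * (PX x * g x) ≤
        ∑ x, ((∑ y, |P (x,y) - Q (x,y)|) + |PX x - QX x|) :=
      Finset.sum_le_sum fun x _ => key x
    have h2 : ∑ x, (∑ y, |P (x,y) - Q (x,y)|) = ∑ p : X × Y, |P p - Q p| := by
      rw [Fintype.sum_prod_type]
    have h3 : ∑ x, |PX x - QX x| ≤ ∑ p : X × Y, |P p - Q p| := by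
      calc ∑ x, |PX x - QX x| = ∑ x, |∑ y, (P (x,y) - Q (x,y))| := by
            simp [PX, QX, Finset.sum_sub_distrib]
        _ ≤ ∑ x, ∑ y, |P (x,y) - Q (x,y)| :=
            Finset.sum_le_sum fun x _ => Finset.abs_sum_le_sum_abs _ _
        _ = ∑ p : X × Y, |P p - Q p| := by rw [Fintype.sum_prod_type]
    rw [Finset.sum_add_distrib, h2] at h1
    rw [← Finset.mul_sum] at h1
    linarith
  -- Markov
  set S := Finset.univ.filter (fun x : X => g x ≤ Real.sqrt ε) with hSdef
  have hsqrt : 0 < Real.sqrt ε := Real.sqrt_pos.mpr hε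
  have hcomp : ∑ x ∈ Sᶜ, PX x ≤ 2 * Real.sqrt ε := by
    have hb : ∀ x ∈ Sᶜ, PX x ≤ PX x * g x / Real.sqrt ε := by
      intro x hx
      have hgx : Real.sqrt ε < g x := by
        simp [S, Finset.mem_compl, Finset.mem_filter] at hx
        exact hx
      rw [le_div_iff₀ hsqrt]
      calc PX x * Real.sqrt ε ≤ PX x * g x :=
        mul_le_mul_of_nonneg_left (le_of_lt hgx) (hPXnn x)
      _ = PX x * g x := rfl
    calc ∑ x ∈ Sᶜ, PX x ≤ ∑ x ∈ Sᶜ, PX x * g x / Real.sqrt ε :=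
          Finset.sum_le_sum hb
      _ = (∑ x ∈ Sᶜ, PX x * g x) / Real.sqrt ε := by rw [Finset.sum_div]
      _ ≤ (∑ x, PX x * g x) / Real.sqrt ε := by
          apply div_le_div_of_nonneg_right ?_ hsqrt.le
          · exact Finset.sum_le_sum_of_subset_of_nonneg (Finset.subset_univ _)
              (fun x _ _ => mul_nonneg (hPXnn x) (hgnn x))
      _ ≤ (2 * ε) / Real.sqrt ε := div_le_div_of_nonneg_right hsum hsqrt.le
      _ = 2 * Real.sqrt ε := by
          rw [eq_comm, eq_div_iff (ne_of_gt hsqrt)]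
          rw [mul_assoc, Real.mul_self_sqrt (le_of_lt hε)]
  have htotal : ∑ x, PX x = 1 := by
    rw [← hP.2, Fintype.sum_prod_type]
  have hsplit : ∑ x ∈ S, PX x + ∑ x ∈ Sᶜ, PX x = 1 := by
    rw [Finset.sum_add_sum_compl, htotal]
  have : 1 - 2 * Real.sqrt ε ≤ ∑ x ∈ S, PX x := by linarith
  exact this
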